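/- arXiv:2308.04399 — 13 statements merged into one kernel-verified Lean document; each statement's English description precedes it below -/
import Mathlib

section
/- Let f : ℝ → ℝ be differentiable on [a,b] with f'(a) > 0 and f' concave on [a,b]. Then f is strictly unimodal on [a,b]: there exists m ∈ [a,b] such that f is strictly increasing on [a,m] and strictly decreasing on [m,b]. -/
/-- If `f` is differentiable on `[a,b]`, `f' a > 0`, and `f'` is concave on `[a,b]`,
then `f` is strictly unimodal on `[a,b]`: there is `m ∈ [a,b]` with `f` strictly
increasing on `[a,m]` and strictly decreasing on `[m,b]`. -/
theorem stmt0 (f : ℝ → ℝ) (a b : ℝ) (hab : a ≤ b)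
    (hdiff : DifferentiableOn ℝ f (Set.Icc a b))
    (hpos : 0 < deriv f a)
    (hconc : ConcaveOn ℝ (Set.Icc a b) (deriv f)) :
    ∃ m ∈ Set.Icc a b,
      StrictMonoOn f (Set.Icc a m) ∧ StrictAntiOn f (Set.Icc m b) := by
  set S : Set ℝ := {x ∈ Set.Icc a b | 0 < deriv f x} with hS
  have haS : a ∈ S := ⟨⟨le_refl a, hab⟩, hpos⟩
  have hSne : S.Nonempty := ⟨a, haS⟩
  have hSbdd : BddAbove S := ⟨b, fun x hx => hx.1.2⟩
  set m := sSup S with hm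
  have ham : a ≤ m := le_csSup hSbdd haS
  have hmb : m ≤ b := csSup_le hSne fun x hx => hx.1.2
  have hmI : m ∈ Set.Icc a b := ⟨ham, hmb⟩
  -- positivity on [a, m)
  have hposlt : ∀ x, a ≤ x → x < m → 0 < deriv f x := by
    intro x hax hxm
    obtain ⟨z, hzS, hxz⟩ := exists_lt_of_lt_csSup hSne hxm
    have hzI : z ∈ Set.Icc a b := hzS.1
    have hxseg : x ∈ segment ℝ a z := by
      rw [segment_eq_Icc (hax.trans hxz.le)]
      exact ⟨hax, hxz.le⟩
    have := hconc.ge_on_segment ⟨le_refl a, hab⟩ hzI hxseg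
    exact lt_of_lt_of_le (lt_min hpos hzS.2) this
  -- negativity on (m, b]
  have hneg : ∀ x, m < x → x ≤ b → deriv f x < 0 := by
    intro x hmx hxb
    obtain ⟨y, hmy, hyx⟩ := exists_between hmx
    have hyI : y ∈ Set.Icc a b := ⟨ham.trans hmy.le, (hyx.le.trans hxb)⟩
    have hynS : y ∉ S := fun hyS => absurd (le_csSup hSbdd hyS) (not_le.mpr hmy)
    have hyle : deriv f y ≤ 0 := by
      by_contra h
      exact hynS ⟨hyI, lt_of_not_ge h⟩
    have hax : a < x := lt_of_le_of_lt ham hmx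
    set t : ℝ := (x - y) / (x - a) with ht
    have hxa : (0:ℝ) < x - a := by linarith
    have ht0 : 0 < t := div_pos (by linarith) hxa
    have ht1 : t < 1 := (div_lt_one hxa).mpr (by linarith)
    have hcomb : t • a + (1 - t) • x = y := by
      field_simp [ht, smul_eq_mul]
      have htx : t * (x - a) = x - y := by rw [ht]; exact div_mul_cancel₀ _ hxa.ne'
      linear_combination (-1:ℝ) * htx
    have hkey := hconc.2 ⟨le_refl a, hab⟩ ⟨hax.le, hxb⟩ ht0.le (show (0:ℝ) ≤ 1 - t by linarith) (show t + (1 - t) = 1 by ring)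
    rw [hcomb] at hkey
    have hlt : (1 - t) * deriv f x < 0 := by
      have hta : 0 < t * deriv f a := mul_pos ht0 hpos
      simp only [smul_eq_mul] at hkey
      linarith
    nlinarith [hlt, ht1]
  refine ⟨m, hmI, ?_, ?_⟩
  · apply strictMonoOn_of_deriv_pos (convex_Icc a m)
      (hdiff.continuousOn.mono (Set.Icc_subset_Icc_right hmb))
    intro x hx
    rw [interior_Icc] at hx
    exact hposlt x hx.1.le hx.2
  · apply strictAntiOn_of_deriv_neg (convex_Icc m b)
      (hdiff.continuousOn.mono (Set.Icc_subset_Icc_left ham))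
    intro x hx
    rw [interior_Icc] at hx
    exact hneg x hx.1 hx.2.le
end

section
/- In the one-specialist fine-tuning game with costs φ₀(α₀) = c₀α₀^{k₀} and φ₁(α₁;α₀) = c₁(α₁-α₀)^{k₁} (c₀,c₁ > 0, k₀,k₁ > 1) and revenue r(α₁) = α₁, for fixed δ ∈ [0,1] the unique sub-game perfect equilibrium strategies are α₀* = (δ/(k₀c₀))^{1/(k₀-1)} and α₁* = (δ/(k₀c₀))^{1/(k₀-1)} + ((1-δ)/(k₁c₁))^{1/(k₁-1)}. -/
private lemma hasDerivAt_aux (m c k : ℝ) (hk : 1 < k) (t : ℝ) :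
    HasDerivAt (fun t => m * t - c * t ^ k) (m - c * (k * t ^ (k - 1))) t := by
  have h1 : HasDerivAt (fun t : ℝ => t ^ k) (k * t ^ (k - 1)) t :=
    Real.hasDerivAt_rpow_const (Or.inr hk.le)
  exact (((hasDerivAt_id t).const_mul m).sub (h1.const_mul c)).congr_deriv (by simp)

private lemma core (m c k : ℝ) (hm : 0 ≤ m) (hc : 0 < c) (hk : 1 < k) :
    IsMaxOn (fun t => m * t - c * t ^ k) (Set.Ici 0) ((m / (k * c)) ^ (1 / (k - 1))) ∧
    ∀ s ∈ Set.Ici (0 : ℝ), IsMaxOn (fun t => m * t - c * t ^ k) (Set.Ici 0) s →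
      s = (m / (k * c)) ^ (1 / (k - 1)) := by
  have hkpos : (0:ℝ) < k := lt_trans one_pos hk
  have hk1 : (0:ℝ) < k - 1 := by linarith
  have hkc : 0 < k * c := mul_pos hkpos hc
  set r := m / (k * c) with hr
  have hr0 : 0 ≤ r := div_nonneg hm hkc.le
  set T := r ^ (1 / (k - 1)) with hT
  have hT0 : 0 ≤ T := Real.rpow_nonneg hr0 _
  rcases hm.eq_or_lt with heq | hmpos
  · -- m = 0
    have hm0 : m = 0 := heq.symm
    have hTz : T = 0 := by
      rw [hT, hr, hm0, zero_div, Real.zero_rpow (by positivity)]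
    constructor
    · intro x hx
      simp only [Set.mem_Ici] at hx
      simp only [hm0, zero_mul, zero_sub, hTz, Set.mem_setOf_eq]
      have h1 : (0:ℝ) ≤ x ^ k := Real.rpow_nonneg hx _
      have h2 : (0:ℝ) ^ k = 0 := Real.zero_rpow (by positivity)
      rw [h2]
      nlinarith
    · intro s hs hmax
      simp only [Set.mem_Ici] at hs
      have := hmax (Set.self_mem_Ici (a := (0:ℝ)))
      simp only [hm0, zero_mul, zero_sub, Set.mem_setOf_eq,
        Real.zero_rpow (show k ≠ 0 by positivity)] at this
      have hsk : (0:ℝ) ≤ s ^ k := Real.rpow_nonneg hs _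
      have hsk0 : s ^ k = 0 := by nlinarith
      have : s = 0 := by
        have := (Real.rpow_eq_zero hs (by positivity)).mp hsk0
        exact this
      rw [this, hTz]
  · -- m > 0
    have hrpos : 0 < r := div_pos hmpos hkc
    have hTpos : 0 < T := Real.rpow_pos_of_pos hrpos _
    have hTk : T ^ (k - 1) = r := by
      rw [hT, ← Real.rpow_mul hr0, one_div, inv_mul_cancel₀ (by linarith), Real.rpow_one]
    set f : ℝ → ℝ := fun t => m * t - c * t ^ k with hf
    have hcont : Continuous f := by
      apply Continuous.sub (continuous_const.mul continuous_id)
      exact continuous_const.mul (Real.continuous_rpow_const (by positivity))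
    have hderiv : ∀ t, deriv f t = m - c * (k * t ^ (k - 1)) :=
      fun t => (hasDerivAt_aux m c k hk t).deriv
    have hmono : StrictMonoOn f (Set.Icc 0 T) := by
      apply strictMonoOn_of_deriv_pos (convex_Icc 0 T) hcont.continuousOn
      intro x hx
      rw [interior_Icc] at hx
      rw [hderiv]
      have hx1 : x ^ (k - 1) < T ^ (k - 1) :=
        Real.rpow_lt_rpow hx.1.le hx.2 hk1
      rw [hTk, hr] at hx1
      have : c * (k * x ^ (k - 1)) < c * (k * (m / (k * c))) := by
        apply mul_lt_mul_of_pos_left _ hc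
        exact mul_lt_mul_of_pos_left hx1 hkpos
      have heqm : c * (k * (m / (k * c))) = m := by field_simp
      linarith [heqm ▸ this]
    have hanti : StrictAntiOn f (Set.Ici T) := by
      apply strictAntiOn_of_deriv_neg (convex_Ici T) hcont.continuousOn
      intro x hx
      rw [interior_Ici] at hx
      rw [hderiv]
      have hx1 : T ^ (k - 1) < x ^ (k - 1) :=
        Real.rpow_lt_rpow hTpos.le hx hk1
      rw [hTk, hr] at hx1
      have : c * (k * (m / (k * c))) < c * (k * x ^ (k - 1)) := by
        apply mul_lt_mul_of_pos_left _ hc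
        exact mul_lt_mul_of_pos_left hx1 hkpos
      have heqm : c * (k * (m / (k * c))) = m := by field_simp
      linarith [heqm ▸ this]
    have hmaxle : ∀ x, 0 ≤ x → f x ≤ f T := by
      intro x hx
      rcases le_total x T with h | h
      · exact hmono.monotoneOn ⟨hx, h⟩ ⟨hT0, le_refl T⟩ h
      · exact hanti.antitoneOn (Set.self_mem_Ici) h h
    constructor
    · intro x hx
      exact hmaxle x hx
    · intro s hs hmax
      simp only [Set.mem_Ici] at hs
      have hle : f T ≤ f s := hmax (Set.mem_Ici.mpr hT0)
      by_contra hne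
      rcases lt_or_gt_of_ne hne with h | h
      · have : f s < f T := hmono ⟨hs, h.le⟩ ⟨hT0, le_refl T⟩ h
        linarith
      · have : f s < f T := hanti (Set.self_mem_Ici) h.le h
        linarith

/-- One-specialist fine-tuning game with polynomial costs: for a fixed `δ ∈ [0,1]`,
the unique subgame-perfect equilibrium strategies are
`α₀* = (δ/(k₀c₀))^(1/(k₀-1))` and `α₁* = α₀* + ((1-δ)/(k₁c₁))^(1/(k₁-1))`. -/
theorem stmt2 (c0 c1 k0 k1 δ : ℝ)
    (hc0 : 0 < c0) (hc1 : 0 < c1) (hk0 : 1 < k0) (hk1 : 1 < k1)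
    (hδ0 : 0 ≤ δ) (hδ1 : δ ≤ 1)
    (α0s α1s : ℝ)
    (hα0s : α0s = (δ / (k0 * c0)) ^ (1 / (k0 - 1)))
    (hα1s : α1s = (δ / (k0 * c0)) ^ (1 / (k0 - 1))
                  + ((1 - δ) / (k1 * c1)) ^ (1 / (k1 - 1))) :
    -- the specialist's best response to any general performance `α₀ ≥ 0`
    -- is unique and equals `α₀ + ((1-δ)/(k₁c₁))^(1/(k₁-1))`
    (∀ α0, 0 ≤ α0 →
      IsMaxOn (fun α1 => (1 - δ) * α1 - c1 * (α1 - α0) ^ k1) (Set.Ici α0)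
        (α0 + ((1 - δ) / (k1 * c1)) ^ (1 / (k1 - 1))) ∧
      ∀ α1 ∈ Set.Ici α0,
        IsMaxOn (fun α1 => (1 - δ) * α1 - c1 * (α1 - α0) ^ k1) (Set.Ici α0) α1 →
        α1 = α0 + ((1 - δ) / (k1 * c1)) ^ (1 / (k1 - 1))) ∧
    -- anticipating this, the generalist's optimal investment is unique and
    -- equals `α₀*`
    (IsMaxOn
        (fun α0 => δ * (α0 + ((1 - δ) / (k1 * c1)) ^ (1 / (k1 - 1))) - c0 * α0 ^ k0)
        (Set.Ici (0 : ℝ)) α0s ∧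
      ∀ α0 ∈ Set.Ici (0 : ℝ),
        IsMaxOn
          (fun α0 => δ * (α0 + ((1 - δ) / (k1 * c1)) ^ (1 / (k1 - 1))) - c0 * α0 ^ k0)
          (Set.Ici (0 : ℝ)) α0 →
        α0 = α0s) ∧
    -- so that the equilibrium domain performance is `α₁*`
    α1s = α0s + ((1 - δ) / (k1 * c1)) ^ (1 / (k1 - 1)) := by
  have hδ' : 0 ≤ 1 - δ := by linarith
  obtain ⟨hmax1, huniq1⟩ := core (1 - δ) c1 k1 hδ' hc1 hk1
  obtain ⟨hmax0, huniq0⟩ := core δ c0 k0 hδ0 hc0 hk0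
  set K := ((1 - δ) / (k1 * c1)) ^ (1 / (k1 - 1)) with hK
  refine ⟨?_, ⟨?_, ?_⟩, by rw [hα1s, hα0s]⟩
  · intro α0 hα0
    constructor
    · intro x hx
      simp only [Set.mem_Ici] at hx
      have h1 : (1 - δ) * (x - α0) - c1 * (x - α0) ^ k1 ≤
          (1 - δ) * K - c1 * K ^ k1 := hmax1 (Set.mem_Ici.mpr (by linarith))
      simp only [Set.mem_setOf_eq]
      have : α0 + K - α0 = K := by ring
      rw [this]
      nlinarith
    · intro x hx hmax
      simp only [Set.mem_Ici] at hx
      have : IsMaxOn (fun t => (1 - δ) * t - c1 * t ^ k1) (Set.Ici 0) (x - α0) := by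
        intro y hy
        simp only [Set.mem_Ici] at hy
        have := hmax (Set.mem_Ici.mpr (show α0 ≤ y + α0 by linarith))
        simp only [Set.mem_setOf_eq, add_sub_cancel_right] at this ⊢
        nlinarith
      have := huniq1 (x - α0) (Set.mem_Ici.mpr (by linarith)) this
      linarith
  · intro x hx
    simp only [Set.mem_Ici] at hx
    have h1 : δ * x - c0 * x ^ k0 ≤ δ * α0s - c0 * α0s ^ k0 := by
      rw [hα0s]; exact hmax0 (Set.mem_Ici.mpr hx)
    simp only [Set.mem_setOf_eq]
    nlinarith
  · intro x hx hmax
    have : IsMaxOn (fun t => δ * t - c0 * t ^ k0) (Set.Ici 0) x := by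
      intro y hy
      have := hmax hy
      simp only [Set.mem_setOf_eq] at this ⊢
      nlinarith
    rw [hα0s]
    exact huniq0 x hx this
end

section
/- In the one-specialist fine-tuning game with quadratic costs (k₀ = k₁ = 2), the value δ ∈ [0,1] maximizing the generalist's equilibrium utility U_G(δ) = δ²/(4c₀) + δ/(2c₁) - δ²/(2c₁) is δ = c₀/(2c₀ - c₁) if c₁ < c₀, and δ = 1 if c₁ ≥ c₀. -/
/-- Powerful-G solution with quadratic costs: `U_G` is maximized on `[0,1]`
at `c₀/(2c₀-c₁)` if `c₁ < c₀`, and at `1` if `c₁ ≥ c₀`. -/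
theorem stmt6 (c0 c1 : ℝ) (hc0 : 0 < c0) (hc1 : 0 < c1) :
    (c1 < c0 →
      c0 / (2 * c0 - c1) ∈ Set.Icc (0 : ℝ) 1 ∧
      IsMaxOn (fun δ : ℝ => δ ^ 2 / (4 * c0) + δ / (2 * c1) - δ ^ 2 / (2 * c1))
        (Set.Icc 0 1) (c0 / (2 * c0 - c1))) ∧
    (c0 ≤ c1 →
      IsMaxOn (fun δ : ℝ => δ ^ 2 / (4 * c0) + δ / (2 * c1) - δ ^ 2 / (2 * c1))
        (Set.Icc 0 1) 1) := by
  constructor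
  · intro h
    have hden : 0 < 2 * c0 - c1 := by linarith
    refine ⟨⟨by positivity, by rw [div_le_one hden]; linarith⟩, ?_⟩
    rw [isMaxOn_iff]
    intro x ⟨hx0, hx1⟩
    have key : 0 ≤ (2 * c0 - c1) / (4 * c0 * c1) * (x - c0 / (2 * c0 - c1)) ^ 2 := by
      positivity
    have hne : (2 * c0 - c1) ≠ 0 := ne_of_gt hden
    have expand : (c0 / (2 * c0 - c1)) ^ 2 / (4 * c0) + (c0 / (2 * c0 - c1)) / (2 * c1)
        - (c0 / (2 * c0 - c1)) ^ 2 / (2 * c1)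
        - (x ^ 2 / (4 * c0) + x / (2 * c1) - x ^ 2 / (2 * c1))
        = (2 * c0 - c1) / (4 * c0 * c1) * (x - c0 / (2 * c0 - c1)) ^ 2 := by
      generalize hd : 2 * c0 - c1 = d at hne ⊢
      field_simp
      rw [← hd]
      ring
    show _ ≤ _
    linarith [expand ▸ key]
  · intro h
    rw [isMaxOn_iff]
    intro x ⟨hx0, hx1⟩
    show _ ≤ _
    have expand : (1:ℝ) ^ 2 / (4 * c0) + 1 / (2 * c1) - 1 ^ 2 / (2 * c1)
        - (x ^ 2 / (4 * c0) + x / (2 * c1) - x ^ 2 / (2 * c1))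
        = ((1 - x) * ((1 + x) * c1 - 2 * c0 * x)) / (4 * c0 * c1) := by
      field_simp
      ring
    have hfac : 0 ≤ (1 - x) * ((1 + x) * c1 - 2 * c0 * x) := by
      apply mul_nonneg (by linarith)
      nlinarith
    have key : 0 ≤ ((1 - x) * ((1 + x) * c1 - 2 * c0 * x)) / (4 * c0 * c1) := by positivity
    linarith [expand ▸ key]
end

section
/- In the one-specialist fine-tuning game with quadratic costs (k₀ = k₁ = 2), the value δ ∈ [0,1] maximizing the specialist's equilibrium utility U_D(δ) = 1/(4c₁) + (1/(2c₀) - 1/(2c₁))δ + (1/(4c₁) - 1/(2c₀))δ² is δ = (c₁-c₀)/(2c₁-c₀) if c₁ ≥ c₀, and δ = 0 if c₁ < c₀. -/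
/-- Powerful-D solution with quadratic costs: `U_D` is maximized on `[0,1]`
at `(c₁-c₀)/(2c₁-c₀)` if `c₁ ≥ c₀`, and at `0` if `c₁ < c₀`. -/
theorem stmt7 (c0 c1 : ℝ) (hc0 : 0 < c0) (hc1 : 0 < c1) :
    (c0 ≤ c1 →
      (c1 - c0) / (2 * c1 - c0) ∈ Set.Icc (0 : ℝ) 1 ∧
      IsMaxOn
        (fun δ : ℝ => 1 / (4 * c1) + (1 / (2 * c0) - 1 / (2 * c1)) * δ
          + (1 / (4 * c1) - 1 / (2 * c0)) * δ ^ 2)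
        (Set.Icc 0 1) ((c1 - c0) / (2 * c1 - c0))) ∧
    (c1 < c0 →
      IsMaxOn
        (fun δ : ℝ => 1 / (4 * c1) + (1 / (2 * c0) - 1 / (2 * c1)) * δ
          + (1 / (4 * c1) - 1 / (2 * c0)) * δ ^ 2)
        (Set.Icc 0 1) 0) := by
  constructor
  · intro h
    have hd : 0 < 2 * c1 - c0 := by linarith
    refine ⟨⟨div_nonneg (by linarith) hd.le, (div_le_one hd).mpr (by linarith)⟩, ?_⟩
    rintro y ⟨hy0, hy1⟩
    simp only [Set.mem_setOf_eq]
    set d := (c1 - c0) / (2 * c1 - c0) with hdd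
    have key : (1 / (4 * c1) + (1 / (2 * c0) - 1 / (2 * c1)) * d
          + (1 / (4 * c1) - 1 / (2 * c0)) * d ^ 2)
        - (1 / (4 * c1) + (1 / (2 * c0) - 1 / (2 * c1)) * y
          + (1 / (4 * c1) - 1 / (2 * c0)) * y ^ 2)
        = ((2*c1-c0)/(4*c0*c1)) * (y - d)^2 := by
      have hne : 2 * c1 - c0 ≠ 0 := hd.ne'
      have hne' : c1 * 2 - c0 ≠ 0 := by linarith
      rw [hdd]; field_simp; ring
    nlinarith [mul_nonneg (div_nonneg hd.le (by positivity : (0:ℝ) ≤ 4*c0*c1)) (sq_nonneg (y - d))]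
  · rintro hlt y ⟨hy0, hy1⟩
    simp only [Set.mem_setOf_eq]
    have e0 : (0:ℝ)^2 = 0 := by ring
    have h1 : 1/(2*c0) - 1/(2*c1) ≤ 0 := by
      rw [sub_nonpos, div_le_div_iff₀ (by positivity) (by positivity)]; linarith
    have h2 : (1/(2*c0) - 1/(2*c1)) + (1/(4*c1) - 1/(2*c0)) < 0 := by
      have : (0:ℝ) < 1/(4*c1) := by positivity
      have e : (1/(2*c0) - 1/(2*c1)) + (1/(4*c1) - 1/(2*c0)) = -(1/(4*c1)) := by ring
      linarith
    rcases le_or_gt (1/(4*c1) - 1/(2*c0)) 0 with ha | ha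
    · nlinarith [mul_nonneg hy0 hy0]
    · nlinarith [mul_nonneg hy0 hy0, mul_nonpos_of_nonpos_of_nonneg h2.le hy0, mul_nonneg (sub_nonneg.mpr hy1) hy0]
end

section
/- In the one-specialist fine-tuning game with quadratic costs, the unique δ ∈ [0,1] maximizing the sum of utilities U_G(δ) + U_D(δ) is δ = c₁/(c₀ + c₁) (the Vertical Monopoly solution). -/
/-- Vertical Monopoly solution with quadratic costs: the unique `δ ∈ [0,1]`
maximizing `U_G + U_D` is `c₁/(c₀+c₁)`. -/
theorem stmt8 (c0 c1 : ℝ) (hc0 : 0 < c0) (hc1 : 0 < c1)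
    (UG UD : ℝ → ℝ)
    (hUG : UG = fun δ => δ ^ 2 / (4 * c0) + δ / (2 * c1) - δ ^ 2 / (2 * c1))
    (hUD : UD = fun δ => 1 / (4 * c1) + (1 / (2 * c0) - 1 / (2 * c1)) * δ
      + (1 / (4 * c1) - 1 / (2 * c0)) * δ ^ 2) :
    c1 / (c0 + c1) ∈ Set.Icc (0 : ℝ) 1 ∧
    IsMaxOn (fun δ => UG δ + UD δ) (Set.Icc 0 1) (c1 / (c0 + c1)) ∧
    ∀ δ ∈ Set.Icc (0 : ℝ) 1,
      IsMaxOn (fun δ => UG δ + UD δ) (Set.Icc 0 1) δ → δ = c1 / (c0 + c1) := by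
  subst hUG hUD
  have hs : 0 < c0 + c1 := by linarith
  set δ₀ : ℝ := c1 / (c0 + c1) with hδ₀
  set a : ℝ := (c0 + c1) / (4 * c0 * c1) with ha
  have hapos : 0 < a := by positivity
  have hmem : δ₀ ∈ Set.Icc (0 : ℝ) 1 := by
    constructor
    · positivity
    · rw [div_le_one hs]; linarith
  have key : ∀ x : ℝ,
      (x ^ 2 / (4 * c0) + x / (2 * c1) - x ^ 2 / (2 * c1)) +
      (1 / (4 * c1) + (1 / (2 * c0) - 1 / (2 * c1)) * x
        + (1 / (4 * c1) - 1 / (2 * c0)) * x ^ 2)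
      = (δ₀ ^ 2 * a + 1 / (4 * c1)) - a * (x - δ₀) ^ 2 := by
    intro x
    rw [hδ₀, ha]
    field_simp
    ring
  refine ⟨hmem, ?_, ?_⟩
  · intro x hx
    simp only [Set.mem_setOf_eq, key]
    nlinarith [sq_nonneg (x - δ₀), sq_nonneg ((δ₀ : ℝ) - δ₀)]
  · intro δ hδ hmax
    have h1 := hmax hmem
    simp only [Set.mem_setOf_eq, key] at h1
    have h3 : (δ - δ₀) ^ 2 ≤ 0 := by
      have h2 : a * (δ - δ₀) ^ 2 ≤ 0 := by nlinarith
      nlinarith [sq_nonneg (δ - δ₀)]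
    have h5 : (δ - δ₀) ^ 2 = 0 := le_antisymm h3 (sq_nonneg _)
    have h6 : δ - δ₀ = 0 := by
      exact pow_eq_zero_iff (by norm_num) |>.mp h5
    linarith
end

section
/- In the quadratic-cost fine-tuning game with c₀ ≠ c₁, δ* = (-√(c₀² - c₀c₁ + c₁²) - c₁ + 2c₀)/(3(c₀ - c₁)) lies in [0,1] and satisfies U_G(δ*) = U_D(δ*); i.e., it equalizes the two players' utilities (the Egalitarian solution). -/
/-- Egalitarian solution with quadratic costs: for `c₀ ≠ c₁`, the stated root
lies in `[0,1]` and equalizes the two players' utilities. -/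
theorem stmt9 (c0 c1 : ℝ) (hc0 : 0 < c0) (hc1 : 0 < c1) (hne : c0 ≠ c1)
    (δs : ℝ)
    (hδs : δs = (-Real.sqrt (c0 ^ 2 - c0 * c1 + c1 ^ 2) - c1 + 2 * c0)
      / (3 * (c0 - c1))) :
    δs ∈ Set.Icc (0 : ℝ) 1 ∧
    δs ^ 2 / (4 * c0) + δs / (2 * c1) - δs ^ 2 / (2 * c1)
      = 1 / (4 * c1) + (1 / (2 * c0) - 1 / (2 * c1)) * δs
        + (1 / (4 * c1) - 1 / (2 * c0)) * δs ^ 2 := by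
  set s := Real.sqrt (c0 ^ 2 - c0 * c1 + c1 ^ 2) with hsdef
  have harg : (0:ℝ) ≤ c0 ^ 2 - c0 * c1 + c1 ^ 2 := by nlinarith [sq_nonneg (c0 - c1)]
  have hs0 : 0 ≤ s := Real.sqrt_nonneg _
  have hs : s ^ 2 = c0 ^ 2 - c0 * c1 + c1 ^ 2 := Real.sq_sqrt harg
  have hd : c0 - c1 ≠ 0 := sub_ne_zero.mpr hne
  constructor
  · rcases lt_or_gt_of_ne hne with h | h
    · -- c0 < c1
      have hden : 3 * (c0 - c1) < 0 := by linarith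
      have hnum : -s - c1 + 2 * c0 ≤ 0 := by
        nlinarith [sq_nonneg (s - (2*c0 - c1)), sq_nonneg s]
      have hnum2 : 3 * (c0 - c1) ≤ -s - c1 + 2 * c0 := by
        nlinarith [sq_nonneg (s - (2*c1 - c0))]
      constructor
      · rw [hδs]; exact div_nonneg_iff.mpr (Or.inr ⟨hnum, hden.le⟩)
      · rw [hδs, div_le_one_of_neg hden]; linarith
    · -- c0 > c1
      have hden : 0 < 3 * (c0 - c1) := by linarith
      have hnum : 0 ≤ -s - c1 + 2 * c0 := by
        nlinarith [sq_nonneg (s - (2*c0 - c1))]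
      have hnum2 : -s - c1 + 2 * c0 ≤ 3 * (c0 - c1) := by
        nlinarith [sq_nonneg (s - (2*c1 - c0)), sq_nonneg s]
      constructor
      · rw [hδs]; positivity
      · rw [hδs, div_le_one hden]; linarith
  · have hδ : δs * (3 * (c0 - c1)) = -s - c1 + 2 * c0 := by
      rw [hδs]; field_simp
    have hse : s = 2 * c0 - c1 - δs * (3 * (c0 - c1)) := by linarith
    have key : (δs ^ 2 * (3 * c1 - 3 * c0) + δs * (4 * c0 - 2 * c1) - c0)
        * (3 * (c0 - c1)) = 0 := by
      linear_combination (s + (2 * c0 - c1 - δs * (3 * (c0 - c1)))) * hse - hs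
    have hquad : δs ^ 2 * (3 * c1 - 3 * c0) + δs * (4 * c0 - 2 * c1) - c0 = 0 := by
      rcases mul_eq_zero.mp key with h | h
      · exact h
      · exact absurd (by linarith : c0 - c1 = 0) hd
    field_simp
    linear_combination 2 * hquad
end

section
/- Let U_D, U_G : [0,1] → ℝ be strictly unimodal with maximizers m_D, m_G respectively. Then every δ in the interval [min(m_D,m_G), max(m_D,m_G)] at which both U_D(δ) > 0 and U_G(δ) > 0 is Pareto-optimal (no other δ' ∈ [0,1] weakly improves both utilities and strictly improves one), and every δ outside [min(m_D,m_G), max(m_D,m_G)] is Pareto-dominated. -/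
/-- Pareto-optimal bargains for strictly unimodal utilities: every `δ` between
the two maximizers at which both utilities are positive is Pareto-optimal, and
every `δ ∈ [0,1]` outside that interval is Pareto-dominated. -/
theorem stmt11 (UD UG : ℝ → ℝ) (mD mG : ℝ)
    (hmD : mD ∈ Set.Icc (0 : ℝ) 1) (hmG : mG ∈ Set.Icc (0 : ℝ) 1)
    (hD1 : StrictMonoOn UD (Set.Icc 0 mD)) (hD2 : StrictAntiOn UD (Set.Icc mD 1))
    (hG1 : StrictMonoOn UG (Set.Icc 0 mG)) (hG2 : StrictAntiOn UG (Set.Icc mG 1)) :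
    (∀ δ ∈ Set.Icc (min mD mG) (max mD mG), 0 < UD δ → 0 < UG δ →
      ¬ ∃ δ' ∈ Set.Icc (0 : ℝ) 1,
          UD δ ≤ UD δ' ∧ UG δ ≤ UG δ' ∧ (UD δ < UD δ' ∨ UG δ < UG δ')) ∧
    (∀ δ ∈ Set.Icc (0 : ℝ) 1, δ ∉ Set.Icc (min mD mG) (max mD mG) →
      ∃ δ' ∈ Set.Icc (0 : ℝ) 1,
        UD δ ≤ UD δ' ∧ UG δ ≤ UG δ' ∧ (UD δ < UD δ' ∨ UG δ < UG δ')) := by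
  obtain ⟨hmD0, hmD1⟩ := hmD
  obtain ⟨hmG0, hmG1⟩ := hmG
  constructor
  · rintro δ ⟨ha, hb⟩ _ _ ⟨δ', ⟨h0, h1⟩, hD, hG, hstrict⟩
    have hδ0 : (0:ℝ) ≤ δ := le_trans (le_min hmD0 hmG0) ha
    have hδ1 : δ ≤ 1 := le_trans hb (max_le hmD1 hmG1)
    rcases lt_trichotomy δ' δ with h | h | h
    · -- δ' < δ ≤ max : the utility whose maximizer is the max strictly decreases
      rcases le_total mD mG with hc | hc
      · have hbm : δ ≤ mG := by have := max_eq_right hc ▸ hb; exact this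
        have : UG δ' < UG δ := hG1 ⟨h0, le_trans h.le hbm⟩ ⟨hδ0, hbm⟩ h
        linarith
      · have hbm : δ ≤ mD := by have := max_eq_left hc ▸ hb; exact this
        have : UD δ' < UD δ := hD1 ⟨h0, le_trans h.le hbm⟩ ⟨hδ0, hbm⟩ h
        linarith
    · subst h
      rcases hstrict with h' | h' <;> exact lt_irrefl _ h'
    · -- δ < δ', δ ≥ min : the utility whose maximizer is the min strictly decreases
      rcases le_total mD mG with hc | hc
      · have ham : mD ≤ δ := by have := min_eq_left hc ▸ ha; exact this
        have : UD δ' < UD δ := hD2 ⟨ham, hδ1⟩ ⟨le_trans ham h.le, h1⟩ h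
        linarith
      · have ham : mG ≤ δ := by have := min_eq_right hc ▸ ha; exact this
        have : UG δ' < UG δ := hG2 ⟨ham, hδ1⟩ ⟨le_trans ham h.le, h1⟩ h
        linarith
  · rintro δ ⟨h0, h1⟩ hout
    rw [Set.mem_Icc, not_and_or, not_le, not_le] at hout
    rcases hout with h | h
    · -- δ < min mD mG : move to min
      have hD : δ < mD := lt_of_lt_of_le h (min_le_left _ _)
      have hG : δ < mG := lt_of_lt_of_le h (min_le_right _ _)
      refine ⟨min mD mG, ⟨le_min hmD0 hmG0, le_trans (min_le_left _ _) hmD1⟩, ?_, ?_, ?_⟩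
      · exact (hD1 ⟨h0, hD.le⟩ ⟨le_min hmD0 hmG0, min_le_left _ _⟩ h).le
      · exact (hG1 ⟨h0, hG.le⟩ ⟨le_min hmD0 hmG0, min_le_right _ _⟩ h).le
      · exact Or.inl (hD1 ⟨h0, hD.le⟩ ⟨le_min hmD0 hmG0, min_le_left _ _⟩ h)
    · -- max mD mG < δ : move to max
      refine ⟨max mD mG, ⟨le_trans hmD0 (le_max_left _ _), max_le hmD1 hmG1⟩, ?_, ?_, ?_⟩
      · exact (hD2 ⟨le_max_left _ _, max_le hmD1 hmG1⟩ ⟨le_trans (le_max_left _ _) h.le, h1⟩ h).le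
      · exact (hG2 ⟨le_max_right _ _, max_le hmD1 hmG1⟩ ⟨le_trans (le_max_right _ _) h.le, h1⟩ h).le
      · exact Or.inl (hD2 ⟨le_max_left _ _, max_le hmD1 hmG1⟩ ⟨le_trans (le_max_left _ _) h.le, h1⟩ h)
end

section
/- In the multi-specialist single-bargain fine-tuning game with n specialists and polynomial costs, for fixed δ the subgame-perfect equilibrium strategies are α₀* = (nδ/(c₀k₀))^{1/(k₀-1)} and αᵢ* = (nδ/(c₀k₀))^{1/(k₀-1)} + ((1-δ)/(cᵢkᵢ))^{1/(kᵢ-1)} for each specialist i. -/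
lemma key_max (A C b : ℝ) (hA : 0 ≤ A) (hC : 0 < C) (hb : 1 < b) :
    IsMaxOn (fun x => A * x - C * x ^ b) (Set.Ici (0:ℝ)) ((A / (C * b)) ^ (1 / (b - 1))) := by
  have hb0 : (0:ℝ) < b := lt_trans one_pos hb
  have hb1 : b - 1 ≠ 0 := by linarith
  rcases eq_or_lt_of_le hA with hA0 | hApos
  · have hm : (A / (C * b)) ^ (1 / (b - 1)) = 0 := by
      rw [← hA0, zero_div, Real.zero_rpow (one_div_ne_zero hb1)]
    intro x hx
    simp only [Set.mem_Ici] at hx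
    have h1 : (0:ℝ) ^ b = 0 := Real.zero_rpow (ne_of_gt hb0)
    have h2 : 0 ≤ x ^ b := Real.rpow_nonneg hx b
    show A * x - C * x ^ b ≤ A * _ - C * _ ^ b
    rw [hm, ← hA0, h1]
    nlinarith
  · set m := (A / (C * b)) ^ (1 / (b - 1)) with hm
    have hq : 0 < A / (C * b) := by positivity
    have hmpos : 0 < m := Real.rpow_pos_of_pos hq _
    have hmb1 : m ^ (b - 1) = A / (C * b) := by
      rw [hm, ← Real.rpow_mul hq.le, one_div, inv_mul_cancel₀ hb1, Real.rpow_one]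
    have hAeq : C * b * m ^ (b - 1) = A := by
      rw [hmb1]; field_simp
    intro x hx
    simp only [Set.mem_Ici] at hx
    show A * x - C * x ^ b ≤ A * m - C * m ^ b
    -- tangent line: m^b + b * m^(b-1) * (x - m) ≤ x^b
    have hs : (-1 : ℝ) ≤ x / m - 1 := by
      have : 0 ≤ x / m := div_nonneg hx hmpos.le
      linarith
    have hbern := one_add_mul_self_le_rpow_one_add hs hb.le
    have hxm : (1 + (x / m - 1)) ^ b = x ^ b / m ^ b := by
      rw [show 1 + (x / m - 1) = x / m by ring, Real.div_rpow hx hmpos.le]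
    rw [hxm] at hbern
    have hmb : 0 < m ^ b := Real.rpow_pos_of_pos hmpos b
    have htan : m ^ b + b * m ^ (b - 1) * (x - m) ≤ x ^ b := by
      have h2 := mul_le_mul_of_nonneg_right hbern hmb.le
      have h3 : x ^ b / m ^ b * m ^ b = x ^ b := div_mul_cancel₀ _ (ne_of_gt hmb)
      have h4 : m ^ (b - 1) * m = m ^ b := by
        rw [← Real.rpow_add_one (ne_of_gt hmpos) (b-1)]; norm_num
      have h5 : (x / m - 1) * m = x - m := by field_simp
      rw [h3] at h2
      calc m ^ b + b * m ^ (b - 1) * (x - m)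
          = (1 + b * (x / m - 1)) * m ^ b := by rw [← h5, ← h4]; ring
        _ ≤ x ^ b := h2
    nlinarith [mul_le_mul_of_nonneg_left htan hC.le, hAeq]


/-- Multi-specialist single-bargain fine-tuning game with polynomial costs:
for fixed `δ`, the subgame-perfect equilibrium strategies are
`α₀* = (nδ/(c₀k₀))^(1/(k₀-1))` and `αᵢ* = α₀* + ((1-δ)/(cᵢkᵢ))^(1/(kᵢ-1))`. -/
theorem stmt12 (n : ℕ) (hn : 1 ≤ n) (c0 k0 δ : ℝ) (c k : Fin n → ℝ)
    (hc0 : 0 < c0) (hk0 : 1 < k0)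
    (hc : ∀ i, 0 < c i) (hk : ∀ i, 1 < k i)
    (hδ0 : 0 ≤ δ) (hδ1 : δ ≤ 1)
    (α0s : ℝ) (αs : Fin n → ℝ)
    (hα0s : α0s = ((n : ℝ) * δ / (c0 * k0)) ^ (1 / (k0 - 1)))
    (hαs : ∀ i, αs i = ((n : ℝ) * δ / (c0 * k0)) ^ (1 / (k0 - 1))
      + ((1 - δ) / (c i * k i)) ^ (1 / (k i - 1))) :
    -- each specialist's best response to any `α₀ ≥ 0`
    (∀ α0, 0 ≤ α0 → ∀ i,
      IsMaxOn (fun α => (1 - δ) * α - c i * (α - α0) ^ (k i)) (Set.Ici α0)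
        (α0 + ((1 - δ) / (c i * k i)) ^ (1 / (k i - 1)))) ∧
    -- the generalist, anticipating the best responses, optimally invests `α₀*`
    IsMaxOn
      (fun α0 => (∑ i, δ * (α0 + ((1 - δ) / (c i * k i)) ^ (1 / (k i - 1))))
        - c0 * α0 ^ k0)
      (Set.Ici (0 : ℝ)) α0s ∧
    -- and each equilibrium domain performance is the best response at `α₀*`
    (∀ i, αs i = α0s + ((1 - δ) / (c i * k i)) ^ (1 / (k i - 1))) := by

  refine ⟨?_, ?_, ?_⟩
  · intro α0 hα0 i
    have hkey := key_max (1 - δ) (c i) (k i) (by linarith) (hc i) (hk i)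
    intro α hα
    simp only [Set.mem_Ici] at hα
    have h1 := hkey (Set.mem_Ici.2 (by linarith : (0:ℝ) ≤ α - α0))
    simp only [IsMaxOn, IsMaxFilter] at h1 ⊢
    set m := ((1 - δ) / (c i * k i)) ^ (1 / (k i - 1)) with hmdef
    show (1 - δ) * α - c i * (α - α0) ^ (k i) ≤
      (1 - δ) * (α0 + m) - c i * (α0 + m - α0) ^ (k i)
    rw [show α0 + m - α0 = m by ring]
    have h1' : (1 - δ) * (α - α0) - c i * (α - α0) ^ (k i)
        ≤ (1 - δ) * m - c i * m ^ (k i) := h1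
    linarith
  · have hkey := key_max ((n : ℝ) * δ) c0 k0 (by positivity) hc0 hk0
    intro x hx
    simp only [Set.mem_Ici] at hx
    have h1 := hkey (Set.mem_Ici.2 hx)
    have h1' : (n : ℝ) * δ * x - c0 * x ^ k0
        ≤ (n : ℝ) * δ * α0s - c0 * α0s ^ k0 := by
      rw [hα0s] at *; exact h1
    have hsum : ∀ y : ℝ, (∑ i, δ * (y + ((1 - δ) / (c i * k i)) ^ (1 / (k i - 1))))
        = (n : ℝ) * δ * y + ∑ i, δ * ((1 - δ) / (c i * k i)) ^ (1 / (k i - 1)) := by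
      intro y
      simp [mul_add, Finset.sum_add_distrib, Finset.sum_const, Finset.card_univ]
      ring
    show (∑ i, δ * (x + ((1 - δ) / (c i * k i)) ^ (1 / (k i - 1)))) - c0 * x ^ k0
      ≤ (∑ i, δ * (α0s + ((1 - δ) / (c i * k i)) ^ (1 / (k i - 1)))) - c0 * α0s ^ k0
    rw [hsum x, hsum α0s]
    linarith
  · intro i
    rw [hαs i, hα0s]
end

section
/- In the multi-specialist single-bargain game with quadratic costs (k₀ = kᵢ = 2 for all i), the δ ∈ [0,1] maximizing U_G(δ) = (n²/(4c₀))δ² + δ(1-δ)Σᵢ 1/(2cᵢ) equals (Σᵢ 1/cᵢ)/(2Σᵢ 1/cᵢ - n²/c₀) when Σᵢ c₀/cᵢ > n², and equals 1 otherwise. -/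
/-- Powerful-G solution in the multi-specialist single-bargain game with quadratic
costs: `U_G` is maximized on `[0,1]` at `(Σᵢ 1/cᵢ)/(2Σᵢ 1/cᵢ - n²/c₀)` when
`Σᵢ c₀/cᵢ > n²`, and at `1` otherwise. -/
theorem stmt13 (n : ℕ) (hn : 1 ≤ n) (c0 : ℝ) (c : Fin n → ℝ)
    (hc0 : 0 < c0) (hc : ∀ i, 0 < c i)
    (UG : ℝ → ℝ)
    (hUG : UG = fun δ => ((n : ℝ) ^ 2 / (4 * c0)) * δ ^ 2
      + δ * (1 - δ) * ∑ i, 1 / (2 * c i)) :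
    ((n : ℝ) ^ 2 < ∑ i, c0 / c i →
      IsMaxOn UG (Set.Icc 0 1)
        ((∑ i, 1 / c i) / (2 * (∑ i, 1 / c i) - (n : ℝ) ^ 2 / c0))) ∧
    (∑ i, c0 / c i ≤ (n : ℝ) ^ 2 → IsMaxOn UG (Set.Icc 0 1) 1) := by
  subst hUG
  set S : ℝ := ∑ i, 1 / c i with hS
  have hS0 : 0 < S := Finset.sum_pos (fun i _ => one_div_pos.2 (hc i)) ⟨⟨0, hn⟩, Finset.mem_univ _⟩
  have h1 : (∑ i, c0 / c i) = c0 * S := by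
    rw [hS, Finset.mul_sum]
    refine Finset.sum_congr rfl fun i _ => ?_
    field_simp
  have h2 : (∑ i, 1 / (2 * c i)) = S / 2 := by
    rw [hS, Finset.sum_div]
    refine Finset.sum_congr rfl fun i _ => ?_
    rw [div_div]
    ring_nf
  constructor
  · intro h
    rw [h1] at h
    have hP : (n : ℝ) ^ 2 / c0 < S := (div_lt_iff₀ hc0).2 (by linarith [mul_comm c0 S])
    set D : ℝ := 2 * S - (n : ℝ) ^ 2 / c0 with hD
    have hden : 0 < D := by rw [hD]; linarith
    have hA : (n : ℝ) ^ 2 / (4 * c0) = (2 * S - D) / 4 := by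
      rw [hD]; field_simp; ring
    intro x hx
    simp only [Set.mem_setOf_eq, h2, hA]
    have hDne : D ≠ 0 := ne_of_gt hden
    have key : (2 * S - D) / 4 * (S / D) ^ 2 + S / D * (1 - S / D) * (S / 2)
        - ((2 * S - D) / 4 * x ^ 2 + x * (1 - x) * (S / 2))
        = (S - D * x) ^ 2 / (4 * D) := by
      field_simp
      ring
    have hpos : 0 ≤ (S - D * x) ^ 2 / (4 * D) := by positivity
    linarith [key, hpos]
  · intro h
    rw [h1] at h
    have hP : S ≤ (n : ℝ) ^ 2 / c0 := (le_div_iff₀ hc0).2 (by linarith [mul_comm c0 S])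
    intro x hx
    simp only [Set.mem_setOf_eq, h2]
    have hx1 := hx.1
    have hx2 := hx.2
    have key : (n : ℝ) ^ 2 / (4 * c0) * 1 ^ 2 + 1 * (1 - 1) * (S / 2)
        - ((n : ℝ) ^ 2 / (4 * c0) * x ^ 2 + x * (1 - x) * (S / 2))
        = (1 - x) * (((n : ℝ) ^ 2 / c0) * (1 + x) - 2 * x * S) / 4 := by
      field_simp
      ring
    nlinarith [key, mul_nonneg (sub_nonneg.2 hx2)
      (mul_nonneg (sub_nonneg.2 hx2) hS0.le), hx1, hS0,
      mul_nonneg (sub_nonneg.2 hx2) (mul_nonneg hx1 hS0.le),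
      mul_le_mul_of_nonneg_right hP (by linarith : (0:ℝ) ≤ 1 + x)]
end

section
/- In the multi-specialist single-bargain game with quadratic costs, the unique δ maximizing the total utility U_G(δ) + Σᵢ U_{Dᵢ}(δ) is δ = n²/(n² + Σᵢ c₀/cᵢ). -/
/-- Vertical Monopoly solution in the multi-specialist single-bargain game with
quadratic costs: the unique `δ` maximizing total utility `U_G + Σᵢ U_{Dᵢ}` is
`n²/(n² + Σᵢ c₀/cᵢ)`. -/
theorem stmt15 (n : ℕ) (hn : 1 ≤ n) (c0 : ℝ) (c : Fin n → ℝ)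
    (hc0 : 0 < c0) (hc : ∀ i, 0 < c i)
    (UG : ℝ → ℝ) (UD : Fin n → ℝ → ℝ)
    (hUG : UG = fun δ => ((n : ℝ) ^ 2 / (4 * c0)) * δ ^ 2
      + δ * (1 - δ) * ∑ i, 1 / (2 * c i))
    (hUD : ∀ i, UD i = fun δ => 1 / (4 * c i)
      + ((n : ℝ) / (2 * c0) - 1 / (2 * c i)) * δ
      + (1 / (4 * c i) - (n : ℝ) / (2 * c0)) * δ ^ 2) :
    IsMaxOn (fun δ => UG δ + ∑ i, UD i δ) Set.univ
      ((n : ℝ) ^ 2 / ((n : ℝ) ^ 2 + ∑ i, c0 / c i)) ∧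
    ∀ δ : ℝ, IsMaxOn (fun δ => UG δ + ∑ i, UD i δ) Set.univ δ →
      δ = (n : ℝ) ^ 2 / ((n : ℝ) ^ 2 + ∑ i, c0 / c i) := by
  have hne : Nonempty (Fin n) := Fin.pos_iff_nonempty.mp hn
  obtain ⟨S, hS⟩ : ∃ S : ℝ, S = ∑ i, 1 / (2 * c i) := ⟨_, rfl⟩
  have hci : ∀ i, c i ≠ 0 := fun i => (hc i).ne'
  have hSpos : 0 < S := hS ▸ Finset.sum_pos
    (fun i _ => by have := hc i; positivity) Finset.univ_nonempty
  have h1 : ∑ i, 1 / (4 * c i) = S / 2 := by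
    rw [hS, Finset.sum_div]
    refine Finset.sum_congr rfl fun i _ => ?_
    rw [div_div]; ring
  have hsum : ∑ i, c0 / c i = 2 * c0 * S := by
    rw [hS, Finset.mul_sum]
    refine Finset.sum_congr rfl fun i _ => ?_
    rw [mul_one_div, mul_div_mul_left _ _ (two_ne_zero)]
  obtain ⟨A, hA⟩ : ∃ A : ℝ, A = -((n : ℝ) ^ 2 / (4 * c0) + S / 2) := ⟨_, rfl⟩
  obtain ⟨B, hB⟩ : ∃ B : ℝ, B = (n : ℝ) ^ 2 / (2 * c0) := ⟨_, rfl⟩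
  have hnpos : (0 : ℝ) < (n : ℝ) := by exact_mod_cast hn
  have hAneg : A < 0 := by
    have h : 0 < (n : ℝ) ^ 2 / (4 * c0) + S / 2 := by positivity
    rw [hA]; linarith
  have hdenpos : 0 < (n : ℝ) ^ 2 + 2 * c0 * S := by positivity
  obtain ⟨δs, hδs⟩ : ∃ d : ℝ, d = (n : ℝ) ^ 2 / ((n : ℝ) ^ 2 + 2 * c0 * S) := ⟨_, rfl⟩
  have hF : ∀ x : ℝ, UG x + ∑ i, UD i x = A * x ^ 2 + B * x + S / 2 := by
    intro x
    simp only [hUG, hUD]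
    rw [Finset.sum_add_distrib, Finset.sum_add_distrib, ← Finset.sum_mul, ← Finset.sum_mul,
      Finset.sum_sub_distrib, Finset.sum_sub_distrib, Finset.sum_const, Finset.card_univ,
      Fintype.card_fin, nsmul_eq_mul, h1, ← hS]
    rw [hA, hB]
    field_simp
    ring
  have hdiff : ∀ x : ℝ, (A * δs ^ 2 + B * δs + S / 2) - (A * x ^ 2 + B * x + S / 2)
      = (-A) * (x - δs) ^ 2 := by
    intro x
    rw [hδs, hA, hB]
    field_simp
    ring
  have key : ∀ x : ℝ, UG x + ∑ i, UD i x ≤ UG δs + ∑ i, UD i δs := by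
    intro x
    rw [hF x, hF δs]
    have h0 : 0 ≤ (-A) * (x - δs) ^ 2 := mul_nonneg (by linarith) (sq_nonneg _)
    linarith [hdiff x]
  have hmax : IsMaxOn (fun δ => UG δ + ∑ i, UD i δ) Set.univ δs := fun x _ => key x
  have hgoal : (n : ℝ) ^ 2 / ((n : ℝ) ^ 2 + ∑ i, c0 / c i) = δs := by rw [hsum, hδs]
  refine ⟨hgoal ▸ hmax, fun δ hδ => ?_⟩
  rw [hgoal]
  have h2 : UG δs + ∑ i, UD i δs ≤ UG δ + ∑ i, UD i δ := hδ (Set.mem_univ δs)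
  rw [hF δs, hF δ] at h2
  have h3 := hdiff δ
  have h4 : (δ - δs) ^ 2 = 0 := by nlinarith [sq_nonneg (δ - δs)]
  have h5 : δ - δs = 0 := by
    exact pow_eq_zero_iff (by norm_num) |>.mp h4
  linarith
end

section
/- In the multi-specialist multi-bargain game with quadratic costs, for fixed vector (δ₁,...,δₙ) ∈ [0,1]ⁿ, the subgame-perfect equilibrium strategies are α₀* = (Σⱼ δⱼ)/(2c₀) and αᵢ* = (Σⱼ δⱼ)/(2c₀) + (1-δᵢ)/(2cᵢ); more generally with polynomial exponents, α₀* = ((Σⱼδⱼ)/(c₀k₀))^{1/(k₀-1)} and αᵢ* = α₀* + ((1-δᵢ)/(cᵢkᵢ))^{1/(kᵢ-1)}. -/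
lemma key_max_s17 (b c k : ℝ) (hb : 0 ≤ b) (hc : 0 < c) (hk : 1 < k) :
    ∀ t, 0 ≤ t → b * t - c * t ^ k ≤
      b * ((b/(c*k))^(1/(k-1))) - c * ((b/(c*k))^(1/(k-1))) ^ k := by
  intro t ht
  set ts := (b/(c*k))^(1/(k-1)) with hts
  have hk0 : (0:ℝ) < k := lt_trans one_pos hk
  have hk1 : k - 1 ≠ 0 := by linarith
  rcases eq_or_lt_of_le hb with hb0 | hbpos
  · have h1 : ts = 0 := by
      rw [hts, ← hb0, zero_div, Real.zero_rpow (by positivity)]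
    rw [h1, ← hb0]
    have h2 : (0:ℝ) ^ k = 0 := Real.zero_rpow (ne_of_gt hk0)
    rw [h2]
    have := Real.rpow_nonneg ht k
    nlinarith
  · have hr : 0 < b / (c*k) := by positivity
    have hts_pos : 0 < ts := Real.rpow_pos_of_pos hr _
    set E := ts ^ (k-1) with hE'
    have hpow : E = b / (c*k) := by
      rw [hE', hts]
      rw [← Real.rpow_mul hr.le]
      rw [one_div, inv_mul_cancel₀ hk1, Real.rpow_one]
    have hE : c * k * E = b := by
      rw [hpow]; field_simp
    have htsk : ts ^ k = E * ts := by
      have h : k - 1 + 1 = k := by ring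
      rw [← h, Real.rpow_add_one hts_pos.ne', hE']
    have hB : 1 + k * (t/ts - 1) ≤ (t/ts) ^ k := by
      have := one_add_mul_self_le_rpow_one_add
        (s := t/ts - 1) (by nlinarith [div_nonneg ht hts_pos.le]) hk.le
      simpa using this
    have hdiv : (t/ts) ^ k = t ^ k / ts ^ k := Real.div_rpow ht hts_pos.le k
    rw [hdiv] at hB
    have hB' : (1 + k * (t/ts - 1)) * ts ^ k ≤ t ^ k :=
      (le_div_iff₀ (by positivity)).mp hB
    have h2 : ts ^ k * (t/ts) = E * t := by
      rw [htsk]; field_simp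
    have h3 : ts ^ k + k*E*t - k*E*ts ≤ t ^ k := by nlinarith [hB', h2, htsk]
    have h4 := mul_le_mul_of_nonneg_left h3 hc.le
    nlinarith [h4, hE]

/-- Multi-specialist multi-bargain fine-tuning game with polynomial costs:
for a fixed vector of bargains `δ`, the subgame-perfect equilibrium strategies are
`α₀* = ((Σⱼδⱼ)/(c₀k₀))^(1/(k₀-1))` and `αᵢ* = α₀* + ((1-δᵢ)/(cᵢkᵢ))^(1/(kᵢ-1))`;
in the quadratic case these reduce to `α₀* = (Σⱼδⱼ)/(2c₀)` and
`αᵢ* = α₀* + (1-δᵢ)/(2cᵢ)`. -/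
theorem stmt17 (n : ℕ) (hn : 1 ≤ n) (c0 k0 : ℝ) (c k : Fin n → ℝ)
    (δ : Fin n → ℝ)
    (hc0 : 0 < c0) (hk0 : 1 < k0)
    (hc : ∀ i, 0 < c i) (hk : ∀ i, 1 < k i)
    (hδ : ∀ i, δ i ∈ Set.Icc (0 : ℝ) 1)
    (α0s : ℝ)
    (hα0s : α0s = ((∑ j, δ j) / (c0 * k0)) ^ (1 / (k0 - 1))) :
    -- each specialist's best response to any `α₀ ≥ 0`
    (∀ α0, 0 ≤ α0 → ∀ i,
      IsMaxOn (fun α => (1 - δ i) * α - c i * (α - α0) ^ (k i)) (Set.Ici α0)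
        (α0 + ((1 - δ i) / (c i * k i)) ^ (1 / (k i - 1)))) ∧
    -- the generalist, anticipating the best responses, optimally invests `α₀*`
    IsMaxOn
      (fun α0 => (∑ i, δ i * (α0 + ((1 - δ i) / (c i * k i)) ^ (1 / (k i - 1))))
        - c0 * α0 ^ k0)
      (Set.Ici (0 : ℝ)) α0s ∧
    -- quadratic specialization of the closed forms
    (k0 = 2 → α0s = (∑ j, δ j) / (2 * c0)) ∧
    (∀ i, k i = 2 →
      ((1 - δ i) / (c i * k i)) ^ (1 / (k i - 1)) = (1 - δ i) / (2 * c i)) := by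
  refine ⟨?_, ?_, ?_, ?_⟩
  · intro α0 hα0 i
    intro α hα
    simp only [Set.mem_Ici] at hα
    simp only [Set.mem_setOf_eq]
    have key := key_max_s17 (1 - δ i) (c i) (k i) (by linarith [(hδ i).2]) (hc i) (hk i)
      (α - α0) (by linarith)
    have key2 := key_max_s17 (1 - δ i) (c i) (k i) (by linarith [(hδ i).2]) (hc i) (hk i)
    set ts := ((1 - δ i) / (c i * k i)) ^ (1 / (k i - 1)) with hts
    have h1 : α0 + ts - α0 = ts := by ring
    rw [h1]
    nlinarith [key]
  · intro α0 hα0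
    simp only [Set.mem_Ici] at hα0
    simp only [Set.mem_setOf_eq]
    set S := ∑ j, δ j with hS
    have hSnn : 0 ≤ S := Finset.sum_nonneg fun j _ => (hδ j).1
    have key := key_max_s17 S c0 k0 hSnn hc0 hk0 α0 hα0
    rw [hα0s]
    have expand : ∀ x : ℝ,
        (∑ i, δ i * (x + ((1 - δ i) / (c i * k i)) ^ (1 / (k i - 1))))
        = S * x + ∑ i, δ i * ((1 - δ i) / (c i * k i)) ^ (1 / (k i - 1)) := by
      intro x
      rw [hS, Finset.sum_mul]
      rw [← Finset.sum_add_distrib]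
      congr 1; ext i; ring
    rw [expand, expand]
    have := key
    linarith [key]
  · intro h2
    rw [hα0s, h2]
    norm_num
    rw [mul_comm]
  · intro i h2
    rw [h2]
    norm_num
    rw [mul_comm]
end

section
/- In the multi-specialist multi-bargain game with quadratic costs, specialist i's equilibrium utility U_{Dᵢ}(δ⃗) = ((Σⱼ δⱼ)/(2c₀))(1-δᵢ) + (1/(4cᵢ))(1-δᵢ)² is nondecreasing in δₖ for every k ≠ i; consequently, the vector of bargains maximizing U_{Dᵢ} over [0,1]ⁿ (with n ≥ 2 specialists) sets δⱼ = 1 for all j ≠ i and δᵢ = 0. -/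
/-- Powerful-Dᵢ solution in the multi-specialist multi-bargain game with quadratic
costs: `U_{Dᵢ}` is nondecreasing in every other bargain `δₖ` (k ≠ i), and it is
maximized over `[0,1]ⁿ` by setting `δⱼ = 1` for `j ≠ i` and `δᵢ = 0`. -/
theorem stmt18 (n : ℕ) (hn : 2 ≤ n) (c0 : ℝ) (c : Fin n → ℝ) (i : Fin n)
    (hc0 : 0 < c0) (hc : ∀ j, 0 < c j)
    (U : (Fin n → ℝ) → ℝ)
    (hU : U = fun δ => (1 - δ i) * (∑ j, δ j) / (2 * c0)
      + (1 - δ i) ^ 2 / (4 * c i)) :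
    (∀ δ : Fin n → ℝ, (∀ j, δ j ∈ Set.Icc (0 : ℝ) 1) →
      ∀ k, k ≠ i → ∀ t, δ k ≤ t → t ≤ 1 → U δ ≤ U (Function.update δ k t)) ∧
    IsMaxOn U {δ : Fin n → ℝ | ∀ j, δ j ∈ Set.Icc (0 : ℝ) 1}
      (fun j => if j = i then 0 else 1) := by
  subst hU
  constructor
  · intro δ hδ k hk t ht ht1
    simp only
    have hupd_i : Function.update δ k t i = δ i := Function.update_of_ne (Ne.symm hk) _ _
    have hs : ∑ j, Function.update δ k t j = t + ∑ j ∈ Finset.univ \ {k}, δ j := by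
      rw [Finset.sum_update_of_mem (Finset.mem_univ k)]
    have hs2 : δ k + ∑ j ∈ Finset.univ \ {k}, δ j = ∑ j, δ j := by
      rw [Finset.sdiff_singleton_eq_erase]
      exact Finset.add_sum_erase _ _ (Finset.mem_univ k)
    have hδi := hδ i
    rw [hupd_i, hs]
    have h1 : 0 ≤ 1 - δ i := by linarith [hδi.2]
    gcongr
    linarith
  · intro δ hδ
    simp only [Set.mem_setOf_eq] at hδ
    simp only [if_pos rfl]
    have hsum : ∑ j, (if j = i then (0:ℝ) else 1) = (n:ℝ) - 1 := by
      have h : ∀ j ∈ Finset.univ, (if j = i then (0:ℝ) else 1) = 1 - (if j = i then 1 else 0) := by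
        intro j _; split <;> norm_num
      rw [Finset.sum_congr rfl h, Finset.sum_sub_distrib, Finset.sum_const,
        Finset.sum_ite_eq' Finset.univ i (fun _ => (1:ℝ))]
      simp
    rw [hsum]
    have hδi := hδ i
    have h1 : 0 ≤ 1 - δ i := by linarith [hδi.2]
    have hn' : (2:ℝ) ≤ n := by exact_mod_cast hn
    have hS : ∑ j, δ j ≤ δ i + ((n:ℝ) - 1) := by
      rw [← Finset.add_sum_erase _ _ (Finset.mem_univ i)]
      have : ∑ j ∈ Finset.univ.erase i, δ j ≤ (Finset.univ.erase i).card • (1:ℝ) :=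
        Finset.sum_le_card_nsmul _ _ 1 (fun j _ => (hδ j).2)
      have hcard : (Finset.univ.erase i).card = n - 1 := by
        rw [Finset.card_erase_of_mem (Finset.mem_univ i), Finset.card_univ, Fintype.card_fin]
      rw [hcard] at this
      have : ∑ j ∈ Finset.univ.erase i, δ j ≤ (n:ℝ) - 1 := by
        rw [nsmul_eq_mul, mul_one] at this
        have : ((n - 1 : ℕ) : ℝ) = (n:ℝ) - 1 := by
          have := Nat.one_le_of_lt hn
          push_cast [Nat.cast_sub this]
          ring
        linarith [this ▸ ‹∑ j ∈ Finset.univ.erase i, δ j ≤ ((n-1:ℕ):ℝ)›]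
      linarith
    have key1 : (1 - δ i) * (∑ j, δ j) ≤ (n:ℝ) - 1 := by
      nlinarith [mul_nonneg hδi.1 (show (0:ℝ) ≤ δ i + (n:ℝ) - 2 by linarith [hδi.1])]
    have key2 : (1 - δ i) ^ 2 ≤ 1 := by nlinarith [hδi.1, hδi.2]
    have hc0' : 0 < 2 * c0 := by linarith
    have hci : 0 < 4 * c i := by linarith [hc i]
    have t1 : (1 - δ i) * (∑ j, δ j) / (2 * c0) ≤ (1 - 0) * ((n:ℝ) - 1) / (2 * c0) := by
      rw [sub_zero, one_mul]
      gcongr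
    have t2 : (1 - δ i) ^ 2 / (4 * c i) ≤ (1 - 0) ^ 2 / (4 * c i) := by
      rw [sub_zero, one_pow]
      gcongr
    simp only [Set.mem_setOf_eq, if_true]
    linarith
end

section
/- Suppose a specialist with revenue rᵢ and cost φᵢ (both differentiable) faces a fixed general performance α₀ and share δᵢ ∈ [0,1), and its utility U(α) = (1-δᵢ)rᵢ(α) - φᵢ(α;α₀) is unimodal in α on [α₀,∞). Then: (a) if rᵢ(α₀) > φᵢ(α₀;α₀)/(1-δᵢ) and rᵢ'(α₀) > φᵢ'(α₀;α₀)/(1-δᵢ), the specialist's optimal action satisfies α* > α₀ and U(α*) > 0 (contributor); (b) if rᵢ(α₀) > φᵢ(α₀;α₀)/(1-δᵢ) and rᵢ'(α₀) < φᵢ'(α₀;α₀)/(1-δᵢ), the optimum is α* = α₀ with U(α₀) > 0 (free-rider); (c) if rᵢ(α₀) < φᵢ(α₀;α₀)/(1-δᵢ) and rᵢ'(α₀) < φᵢ'(α₀;α₀)/(1-δᵢ), the specialist prefers the disagreement payoff 0 to any α ≥ α₀ (abstainer). -/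
private lemma deriv_pos_right {f : ℝ → ℝ} {a : ℝ} (hf : HasDerivAt f (deriv f a) a)
    (hd : 0 < deriv f a) : ∀ᶠ y in nhdsWithin a (Set.Ioi a), f a < f y := by
  have h := hasDerivAt_iff_tendsto_slope.1 hf
  have h2 : ∀ᶠ y in nhdsWithin a {a}ᶜ, 0 < slope f a y := h (Ioi_mem_nhds hd)
  have hle : nhdsWithin a (Set.Ioi a) ≤ nhdsWithin a {a}ᶜ :=
    nhdsWithin_mono _ (fun y hy => ne_of_gt hy)
  filter_upwards [hle h2, self_mem_nhdsWithin] with y hy hy'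
  have hs : 0 < (f y - f a) / (y - a) := by
    simpa [slope_def_field, div_eq_inv_mul] using hy
  have hya : 0 < y - a := sub_pos.2 hy'
  rcases div_pos_iff.1 hs with ⟨h1, _⟩ | ⟨_, h2'⟩ <;> linarith

private lemma deriv_neg_right {f : ℝ → ℝ} {a : ℝ} (hf : HasDerivAt f (deriv f a) a)
    (hd : deriv f a < 0) : ∀ᶠ y in nhdsWithin a (Set.Ioi a), f y < f a := by
  have hf' : HasDerivAt (fun x => -f x) (deriv (fun x => -f x) a) a := by
    simpa [deriv.fun_neg] using hf.fun_neg
  have hd' : 0 < deriv (fun x => -f x) a := by simpa [deriv.fun_neg] using hd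
  filter_upwards [deriv_pos_right hf' hd'] with y hy
  simpa using hy

/-- Specialist regimes (contributor / free-rider / abstainer), determined by the
0th- and 1st-order conditions at zero investment `α = α₀`, for a specialist with
differentiable revenue `r` and cost `φ`, share `δ ∈ [0,1)`, and utility
`U(α) = (1-δ) r(α) - φ(α)` unimodal on `[α₀,∞)`. -/
theorem stmt19 (r φ : ℝ → ℝ) (α0 δ : ℝ)
    (hr : Differentiable ℝ r) (hφ : Differentiable ℝ φ)
    (hδ0 : 0 ≤ δ) (hδ1 : δ < 1)
    (U : ℝ → ℝ) (hU : U = fun α => (1 - δ) * r α - φ α)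
    (hunimodal : ∃ m, α0 ≤ m ∧ MonotoneOn U (Set.Icc α0 m) ∧ AntitoneOn U (Set.Ici m)) :
    -- (a) contributor
    ((φ α0 / (1 - δ) < r α0 ∧ deriv φ α0 / (1 - δ) < deriv r α0) →
      ∃ αs, α0 < αs ∧ IsMaxOn U (Set.Ici α0) αs ∧ 0 < U αs) ∧
    -- (b) free-rider
    ((φ α0 / (1 - δ) < r α0 ∧ deriv r α0 < deriv φ α0 / (1 - δ)) →
      IsMaxOn U (Set.Ici α0) α0 ∧ 0 < U α0) ∧
    -- (c) abstainer
    ((r α0 < φ α0 / (1 - δ) ∧ deriv r α0 < deriv φ α0 / (1 - δ)) →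
      ∀ α, α0 ≤ α → U α < 0) := by
  have hδ : (0:ℝ) < 1 - δ := by linarith
  obtain ⟨m, hm, hmono, hanti⟩ := hunimodal
  have hUd : HasDerivAt U ((1 - δ) * deriv r α0 - deriv φ α0) α0 := by
    rw [hU]
    exact (((hr α0).hasDerivAt.const_mul (1 - δ)).sub (hφ α0).hasDerivAt)
  have hUderiv : deriv U α0 = (1 - δ) * deriv r α0 - deriv φ α0 := hUd.deriv
  have hUd' : HasDerivAt U (deriv U α0) α0 := hUderiv ▸ hUd
  -- value condition translations
  have hval : ∀ {x y : ℝ}, x / (1 - δ) < y → 0 < (1 - δ) * y - x := by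
    intro x y h
    have := (div_lt_iff₀ hδ).1 h
    nlinarith
  -- max at m if α0 < m or m = α0
  have hmaxm : IsMaxOn U (Set.Ici α0) m := by
    intro x hx
    rcases le_or_gt x m with h | h
    · exact hmono ⟨hx, h⟩ ⟨hm, le_refl m⟩ h
    · exact hanti (le_refl m) h.le h.le
  refine ⟨?_, ?_, ?_⟩
  · rintro ⟨h0, h1⟩
    have hd : 0 < deriv U α0 := by
      rw [hUderiv]
      have := (div_lt_iff₀ hδ).1 h1
      nlinarith
    have hU0 : 0 < U α0 := by rw [hU]; exact hval h0
    -- m ≠ α0: otherwise U antitone on Ici α0, contradicting positive derivative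
    have hmlt : α0 < m := by
      rcases lt_or_eq_of_le hm with h | h
      · exact h
      · exfalso
        have hev := deriv_pos_right hUd' hd
        obtain ⟨y, hy1, hy2⟩ := (hev.and self_mem_nhdsWithin).exists
        exact absurd (hanti (h ▸ le_refl α0) (h ▸ hy2.le) (h ▸ hy2.le)) (not_le.2 hy1)
    refine ⟨m, hmlt, hmaxm, lt_of_lt_of_le hU0 ?_⟩
    exact hmono ⟨le_refl α0, hm⟩ ⟨hm, le_refl m⟩ hm
  · rintro ⟨h0, h1⟩
    have hd : deriv U α0 < 0 := by
      rw [hUderiv]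
      have := (lt_div_iff₀ hδ).1 h1
      nlinarith
    have hU0 : 0 < U α0 := by rw [hU]; exact hval h0
    have hmeq : m = α0 := by
      by_contra hne
      have hmlt : α0 < m := lt_of_le_of_ne hm (Ne.symm hne)
      have hev := deriv_neg_right hUd' hd
      have hIio : Set.Iio m ∈ nhdsWithin α0 (Set.Ioi α0) :=
        nhdsWithin_le_nhds (Iio_mem_nhds hmlt)
      obtain ⟨y, hy1, hy2, hy3⟩ := (hev.and ((eventually_mem_nhdsWithin).and
        (Filter.eventually_iff.2 hIio))).exists
      have hy3' : y < m := hy3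
      have := hmono ⟨le_refl α0, hm⟩ ⟨hy2.le, hy3'.le⟩ hy2.le
      linarith
    refine ⟨hmeq ▸ hmaxm, hU0⟩
  · rintro ⟨h0, h1⟩
    have hd : deriv U α0 < 0 := by
      rw [hUderiv]
      have := (lt_div_iff₀ hδ).1 h1
      nlinarith
    have hU0 : U α0 < 0 := by
      rw [hU]
      show (1 - δ) * r α0 - φ α0 < 0
      have := (lt_div_iff₀ hδ).1 h0
      nlinarith
    have hmeq : m = α0 := by
      by_contra hne
      have hmlt : α0 < m := lt_of_le_of_ne hm (Ne.symm hne)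
      have hev := deriv_neg_right hUd' hd
      have hIio : Set.Iio m ∈ nhdsWithin α0 (Set.Ioi α0) :=
        nhdsWithin_le_nhds (Iio_mem_nhds hmlt)
      obtain ⟨y, hy1, hy2, hy3⟩ := (hev.and ((eventually_mem_nhdsWithin).and
        (Filter.eventually_iff.2 hIio))).exists
      have hy3' : y < m := hy3
      have := hmono ⟨le_refl α0, hm⟩ ⟨hy2.le, hy3'.le⟩ hy2.le
      linarith
    intro α hα
    calc U α ≤ U α0 := hanti (hmeq ▸ le_refl α0) (hmeq ▸ hα) hα
    _ < 0 := hU0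
end
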